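/- Let q₀ := 2/A₀ > 1 for fixed 1 < A₀ < 2, and define a₁ = 1, b_j = 2^{d_j}a_j, a_{j+1} = 2^j b_j with (d_j) strictly increasing, d₁ ≥ 1; set μ_{a₁} = 1, μ_{b_j} = A^{d_j}μ_{a_j} and μ_{a_{j+1}} = 2^{j/2}μ_{b_j} for a parameter 1 < A ≤ A₀. Then for all j ≥ 1: (a_j/μ_{a_j})·((2/A)^{d_j} − 1)/((2/A) − 1) ≥ 1; consequently the block sums Σ_{k=a_j+1}^{b_j} 1/μ_k are bounded below by 1/A and Σ_{k≥1} 1/μ_k = +∞ (quasianalyticity). -/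

import Mathlib

open Filter

/-- A weight function: non-decreasing on `[0,∞)`, non-negative, tending to `+∞`. -/
def IsWeight (ω : ℝ → ℝ) : Prop :=
  (∀ t, 0 ≤ ω t) ∧ MonotoneOn ω (Set.Ici (0 : ℝ)) ∧ Tendsto ω atTop atTop

/-- Property `P(ω,γ)`: there is `K > 1` with `limsup_{t→∞} ω(K^γ t)/ω(t) < K`. -/
def PropP (ω : ℝ → ℝ) (γ : ℝ) : Prop :=
  ∃ K : ℝ, 1 < K ∧ limsup (fun t => ω (K ^ γ * t) / ω t) atTop < K

/-- The growth index `γ(ω) = sup {γ > 0 : P(ω,γ)} ∈ [0,∞]` (`0` if the set is empty). -/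
noncomputable def gammaIdx (ω : ℝ → ℝ) : ENNReal :=
  ⨆ γ ∈ {γ : ℝ | 0 < γ ∧ PropP ω γ}, ENNReal.ofReal γ

/-- Dyadic block localization: if `a ≥ 1` and `a < k ≤ 2^d a`, then `k` lies in a
dyadic block `(2^i a, 2^{i+1} a]` with `i < d`. -/
lemma exists_dyadic_block (a d k : ℕ) (ha : 1 ≤ a) (h1 : a < k) (h2 : k ≤ 2 ^ d * a) :
    ∃ i < d, 2 ^ i * a < k ∧ k ≤ 2 ^ (i + 1) * a := by
  induction d with
  | zero => simp at h2; omega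
  | succ d ih =>
    by_cases h : k ≤ 2 ^ d * a
    · obtain ⟨i, hi, h3, h4⟩ := ih h
      exact ⟨i, by omega, h3, h4⟩
    · refine ⟨d, by omega, by omega, ?_⟩
      rw [pow_succ] at h2
      rw [pow_succ]
      omega

theorem mu_quasianalytic (A₀ A : ℝ) (hA₀ : 1 < A₀) (hA₀2 : A₀ < 2)
    (hA : 1 < A) (hAA₀ : A ≤ A₀)
    (a b d : ℕ → ℕ) (μ : ℕ → ℝ)
    (hd : StrictMonoOn d (Set.Ici 1)) (hd1 : 1 ≤ d 1)
    (ha1 : a 1 = 1)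
    (hb : ∀ j ≥ 1, b j = 2 ^ (d j) * a j)
    (ha : ∀ j ≥ 1, a (j + 1) = 2 ^ j * b j)
    (hμa1 : μ (a 1) = 1)
    (hμb : ∀ j ≥ 1, μ (b j) = A ^ (d j) * μ (a j))
    (hμa : ∀ j ≥ 1, μ (a (j + 1)) = (2 : ℝ) ^ ((j : ℝ) / 2) * μ (b j))
    (hblock1 : ∀ j ≥ 1, ∀ i < d j, ∀ k, 2 ^ i * a j < k → k ≤ 2 ^ (i + 1) * a j →
      μ k = A ^ (i + 1) * μ (a j))
    (hblock2 : ∀ j ≥ 1, ∀ i < j, ∀ k, 2 ^ i * b j < k → k ≤ 2 ^ (i + 1) * b j →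
      μ k = (2 : ℝ) ^ ((1 : ℝ) / (2 * 2 ^ i * (b j : ℝ))) * μ (k - 1)) :
    (∀ j ≥ 1, 1 ≤ (a j : ℝ) / μ (a j) * (((2 / A) ^ (d j) - 1) / (2 / A - 1))) ∧
    (∀ j ≥ 1, 1 / A ≤ ∑ k ∈ Finset.Ioc (a j) (b j), 1 / μ k) ∧
    ¬ Summable (fun k : ℕ => 1 / μ (k + 1)) := by
  have hA2 : A < 2 := lt_of_le_of_lt hAA₀ hA₀2
  have hApos : 0 < A := by linarith
  -- d j ≥ 1 for j ≥ 1
  have hdj : ∀ j ≥ 1, 1 ≤ d j := by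
    intro j hj
    rcases eq_or_lt_of_le hj with h | h
    · rw [← h]; exact hd1
    · exact hd1.trans (le_of_lt (hd (Set.mem_Ici.2 le_rfl) (Set.mem_Ici.2 hj) h))
  -- main induction: positivity, a j ≥ 1, μ (a j) ≤ a j
  have hmain : ∀ j, 1 ≤ j → 0 < μ (a j) ∧ 1 ≤ a j ∧ μ (a j) ≤ (a j : ℝ) := by
    intro j hj
    induction j, hj using Nat.le_induction with
    | base => refine ⟨by rw [hμa1]; norm_num, by rw [ha1], by rw [hμa1, ha1]; norm_num⟩
    | succ j hj ih =>
      obtain ⟨hpos, haj, hle⟩ := ih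
      have haeq : a (j + 1) = 2 ^ j * (2 ^ (d j) * a j) := by rw [ha j hj, hb j hj]
      have hμeq : μ (a (j + 1)) = (2 : ℝ) ^ ((j : ℝ) / 2) * (A ^ (d j) * μ (a j)) := by
        rw [hμa j hj, hμb j hj]
      have hr2 : (0 : ℝ) < (2 : ℝ) ^ ((j : ℝ) / 2) := Real.rpow_pos_of_pos two_pos _
      refine ⟨?_, ?_, ?_⟩
      · rw [hμeq]; positivity
      · rw [haeq]
        have h1 : 0 < 2 ^ j := Nat.pow_pos (by norm_num)
        have h2 : 0 < 2 ^ (d j) := Nat.pow_pos (by norm_num)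
        exact Nat.mul_pos h1 (Nat.mul_pos h2 haj)
      · rw [hμeq, haeq]
        have hr2le : (2 : ℝ) ^ ((j : ℝ) / 2) ≤ (2 : ℝ) ^ (j : ℕ) := by
          rw [← Real.rpow_natCast 2 j]
          exact Real.rpow_le_rpow_of_exponent_le one_le_two
            (by have : (0:ℝ) ≤ (j:ℝ) := Nat.cast_nonneg j; linarith)
        have hAle : A ^ (d j) ≤ (2 : ℝ) ^ (d j) := pow_le_pow_left₀ hApos.le hA2.le _
        have hμnn : 0 ≤ μ (a j) := hpos.le
        have hcast : ((2 ^ j * (2 ^ (d j) * a j) : ℕ) : ℝ)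
            = (2 : ℝ) ^ j * ((2 : ℝ) ^ (d j) * (a j : ℝ)) := by push_cast; ring
        rw [hcast]
        have h2pos : (0 : ℝ) < (2 : ℝ) ^ (d j) := by positivity
        have hApow : (0 : ℝ) < A ^ (d j) := by positivity
        calc (2 : ℝ) ^ ((j : ℝ) / 2) * (A ^ (d j) * μ (a j))
            ≤ (2 : ℝ) ^ (j : ℕ) * ((2 : ℝ) ^ (d j) * (a j : ℝ)) := by
              apply mul_le_mul hr2le (mul_le_mul hAle hle hμnn h2pos.le)
                (mul_nonneg hApow.le hμnn) (by positivity)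
          _ = _ := by norm_num
  -- first claim
  have part1 : ∀ j ≥ 1, 1 ≤ (a j : ℝ) / μ (a j) * (((2 / A) ^ (d j) - 1) / (2 / A - 1)) := by
    intro j hj
    obtain ⟨hpos, haj, hle⟩ := hmain j hj
    have h1 : 1 ≤ (a j : ℝ) / μ (a j) := (one_le_div hpos).2 hle
    have hq : (1 : ℝ) < 2 / A := (one_lt_div hApos).2 hA2
    have hq1 : 2 / A ≤ (2 / A) ^ (d j) := by
      calc 2 / A = (2 / A) ^ 1 := (pow_one _).symm
        _ ≤ (2 / A) ^ (d j) := pow_le_pow_right₀ hq.le (hdj j hj)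
    have h2 : (1 : ℝ) ≤ ((2 / A) ^ (d j) - 1) / (2 / A - 1) := by
      rw [le_div_iff₀ (by linarith)]; linarith
    nlinarith
  -- block sum lower bound
  have part2 : ∀ j ≥ 1, 1 / A ≤ ∑ k ∈ Finset.Ioc (a j) (b j), 1 / μ k := by
    intro j hj
    obtain ⟨hpos, haj, hle⟩ := hmain j hj
    have hApow : (0 : ℝ) < A ^ (d j) := by positivity
    have key : ∀ k ∈ Finset.Ioc (a j) (b j), (1 : ℝ) / (A ^ (d j) * μ (a j)) ≤ 1 / μ k := by
      intro k hk
      rw [Finset.mem_Ioc] at hk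
      obtain ⟨i, hi, h3, h4⟩ := exists_dyadic_block (a j) (d j) k haj hk.1
        (by rw [← hb j hj]; exact hk.2)
      have hμk : μ k = A ^ (i + 1) * μ (a j) := hblock1 j hj i hi k h3 h4
      have hμkpos : 0 < μ k := by rw [hμk]; positivity
      apply one_div_le_one_div_of_le hμkpos
      rw [hμk]
      have : A ^ (i + 1) ≤ A ^ (d j) := pow_le_pow_right₀ hA.le (by omega)
      nlinarith
    have hcard : ((Finset.Ioc (a j) (b j)).card : ℝ) = ((2 : ℝ) ^ (d j) - 1) * (a j : ℝ) := by
      rw [Nat.card_Ioc, hb j hj]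
      have h1 : 1 ≤ 2 ^ (d j) := Nat.one_le_two_pow
      have : 2 ^ (d j) * a j - a j = (2 ^ (d j) - 1) * a j := by
        rw [Nat.sub_mul, one_mul]
      rw [this]
      push_cast [h1]
      ring
    calc (1 : ℝ) / A
        ≤ ((2 : ℝ) ^ (d j) - 1) * (a j : ℝ) * ((1 : ℝ) / (A ^ (d j) * μ (a j))) := by
          rw [mul_one_div, div_le_div_iff₀ hApos (by positivity)]
          -- reduces to A ^ (d j) * μ (a j) ≤ ((2^(d j) - 1) * a j) * A
          have hd1j := hdj j hj
          have hsplit : A ^ (d j) = A ^ (d j - 1) * A := by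
            rw [← pow_succ]; congr 1; omega
          have h2split : (2 : ℝ) ^ (d j) = (2 : ℝ) ^ (d j - 1) * 2 := by
            rw [← pow_succ]; congr 1; omega
          have hAle : A ^ (d j - 1) ≤ (2 : ℝ) ^ (d j - 1) := pow_le_pow_left₀ hApos.le hA2.le _
          have h2ge1 : (1 : ℝ) ≤ (2 : ℝ) ^ (d j - 1) := one_le_pow₀ (by norm_num)
          have hkey : A ^ (d j) ≤ ((2 : ℝ) ^ (d j) - 1) * A := by
            rw [hsplit, h2split]; nlinarith
          have hμnn : 0 ≤ μ (a j) := hpos.le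
          have haj1 : (1 : ℝ) ≤ (a j : ℝ) := by exact_mod_cast haj
          nlinarith
      _ = ((Finset.Ioc (a j) (b j)).card : ℝ) * ((1 : ℝ) / (A ^ (d j) * μ (a j))) := by
          rw [hcard]
      _ ≤ ∑ k ∈ Finset.Ioc (a j) (b j), 1 / μ k := by
          have := Finset.card_nsmul_le_sum (Finset.Ioc (a j) (b j))
            (fun k => 1 / μ k) ((1 : ℝ) / (A ^ (d j) * μ (a j))) key
          rwa [nsmul_eq_mul] at this
  refine ⟨part1, part2, ?_⟩
  -- positivity of μ on [1, ∞)
  have hbj1 : ∀ j ≥ 1, 1 ≤ b j := by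
    intro j hj
    obtain ⟨_, haj, _⟩ := hmain j hj
    rw [hb j hj]
    have : 0 < 2 ^ (d j) := Nat.pow_pos (by norm_num)
    nlinarith
  have habj : ∀ j ≥ 1, a j ≤ b j := by
    intro j hj
    rw [hb j hj]
    have : 1 ≤ 2 ^ (d j) := Nat.one_le_two_pow
    nlinarith
  have hbaj : ∀ j ≥ 1, b j ≤ a (j + 1) := by
    intro j hj
    rw [ha j hj]
    have : 1 ≤ 2 ^ j := Nat.one_le_two_pow
    nlinarith
  -- positivity on interpolation segments
  have hpos2 : ∀ j, 1 ≤ j → ∀ k, b j ≤ k → k ≤ a (j + 1) → 0 < μ k := by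
    intro j hj k hk
    induction k, hk using Nat.le_induction with
    | base =>
      intro _
      obtain ⟨hpos, _, _⟩ := hmain j hj
      rw [hμb j hj]; positivity
    | succ n hn ih =>
      intro hle
      obtain ⟨i, hi, h3, h4⟩ := exists_dyadic_block (b j) j (n + 1) (hbj1 j hj)
        (by omega) (by rw [← ha j hj]; exact hle)
      have heq := hblock2 j hj i hi (n + 1) h3 h4
      simp only [Nat.add_sub_cancel] at heq
      have hμn : 0 < μ n := ih (by omega)
      rw [heq]
      have : (0 : ℝ) < (2 : ℝ) ^ ((1 : ℝ) / (2 * 2 ^ i * (b j : ℝ))) :=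
        Real.rpow_pos_of_pos two_pos _
      positivity
  -- positivity on a segment [a j, a (j+1)]
  have hseg : ∀ j, 1 ≤ j → ∀ k, a j ≤ k → k ≤ a (j + 1) → 0 < μ k := by
    intro j hj k h1 h2
    obtain ⟨hpos, haj, _⟩ := hmain j hj
    rcases eq_or_lt_of_le h1 with h | h
    · rw [← h]; exact hpos
    · by_cases hk : k ≤ b j
      · obtain ⟨i, hi, h3, h4⟩ := exists_dyadic_block (a j) (d j) k haj h
          (by rw [← hb j hj]; exact hk)
        rw [hblock1 j hj i hi k h3 h4]
        positivity
      · exact hpos2 j hj k (by omega) h2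
  have hposle : ∀ j, 1 ≤ j → ∀ k, 1 ≤ k → k ≤ a j → 0 < μ k := by
    intro j hj
    induction j, hj using Nat.le_induction with
    | base =>
      intro k h1 h2
      rw [ha1] at h2
      have : k = 1 := by omega
      rw [this, ← ha1]
      rw [hμa1]; norm_num
    | succ j hj ih =>
      intro k h1 h2
      by_cases hk : k ≤ a j
      · exact ih k h1 hk
      · exact hseg j hj k (by omega) h2
  have hgrow : ∀ j, 1 ≤ j → j ≤ a j := by
    intro j hj
    induction j, hj using Nat.le_induction with
    | base => rw [ha1]
    | succ j hj ih =>
      have h1 := habj j hj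
      have h2 : 2 * b j ≤ a (j + 1) := by
        rw [ha j hj]
        have : 2 ≤ 2 ^ j := by
          calc 2 = 2 ^ 1 := rfl
            _ ≤ 2 ^ j := Nat.pow_le_pow_right (by norm_num) hj
        nlinarith
      omega
  have hposall : ∀ k, 1 ≤ k → 0 < μ k :=
    fun k hk => hposle k hk k hk (hgrow k hk)
  -- shift lemma
  have hshift : ∀ (x y : ℕ) (g : ℕ → ℝ),
      ∑ m ∈ Finset.Ioc x y, g m = ∑ k ∈ Finset.Ico x y, g (k + 1) := by
    intro x y g
    rw [← Finset.Ico_add_one_add_one_eq_Ioc, Finset.sum_Ico_eq_sum_range, Finset.sum_Ico_eq_sum_range]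
    have hyx : y + 1 - (x + 1) = y - x := by omega
    rw [hyx]
    exact Finset.sum_congr rfl (fun i _ => by congr 1; omega)
  -- partial sums grow like N/A
  have hT : ∀ N : ℕ, 1 ≤ N → (N : ℝ) / A ≤ ∑ m ∈ Finset.Ioc 0 (b N), 1 / μ m := by
    intro N hN
    induction N, hN using Nat.le_induction with
    | base =>
      have hsub : Finset.Ioc (a 1) (b 1) ⊆ Finset.Ioc 0 (b 1) :=
        Finset.Ioc_subset_Ioc_left (by omega)
      have hnn1 : ∀ k ∈ Finset.Ioc 0 (b 1), k ∉ Finset.Ioc (a 1) (b 1) → 0 ≤ 1 / μ k := by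
        intro k hk _
        rw [Finset.mem_Ioc] at hk
        have : 0 < μ k := hposall k hk.1
        positivity
      calc ((1 : ℕ) : ℝ) / A = 1 / A := by norm_num
        _ ≤ ∑ k ∈ Finset.Ioc (a 1) (b 1), 1 / μ k := part2 1 le_rfl
        _ ≤ _ := Finset.sum_le_sum_of_subset_of_nonneg hsub hnn1
    | succ N hN ih =>
      have h1 : b N ≤ b (N + 1) := le_trans (hbaj N hN) (habj (N + 1) (by omega))
      have hsplit := Finset.sum_Ioc_consecutive (fun m => 1 / μ m)
        (Nat.zero_le (b N)) h1
      have hsub : Finset.Ioc (a (N + 1)) (b (N + 1)) ⊆ Finset.Ioc (b N) (b (N + 1)) :=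
        Finset.Ioc_subset_Ioc_left (hbaj N hN)
      have hnn : ∀ k ∈ Finset.Ioc (b N) (b (N + 1)), k ∉ Finset.Ioc (a (N + 1)) (b (N + 1)) →
          0 ≤ 1 / μ k := by
        intro k hk _
        rw [Finset.mem_Ioc] at hk
        have : 0 < μ k := hposall k (by have := hbj1 N hN; omega)
        positivity
      have h2 : 1 / A ≤ ∑ m ∈ Finset.Ioc (b N) (b (N + 1)), 1 / μ m :=
        le_trans (part2 (N + 1) (by omega)) (Finset.sum_le_sum_of_subset_of_nonneg hsub hnn)
      have : ∑ m ∈ Finset.Ioc 0 (b (N + 1)), 1 / μ m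
          = ∑ m ∈ Finset.Ioc 0 (b N), 1 / μ m + ∑ m ∈ Finset.Ioc (b N) (b (N + 1)), 1 / μ m :=
        hsplit.symm
      rw [this]
      push_cast
      have : ((N : ℝ) + 1) / A = (N : ℝ) / A + 1 / A := by ring
      rw [this]
      linarith
  -- conclude non-summability
  intro hsum
  have hnn : ∀ k : ℕ, 0 ≤ 1 / μ (k + 1) := by
    intro k
    have : 0 < μ (k + 1) := hposall (k + 1) (by omega)
    positivity
  have hbound : ∀ N : ℕ, 1 ≤ N → (N : ℝ) / A ≤ ∑' k, 1 / μ (k + 1) := by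
    intro N hN
    have h1 := hT N hN
    have h2 : ∑ m ∈ Finset.Ioc 0 (b N), 1 / μ m
        = ∑ k ∈ Finset.Ico 0 (b N), 1 / μ (k + 1) := hshift 0 (b N) (fun m => 1 / μ m)
    have h3 : ∑ k ∈ Finset.Ico 0 (b N), 1 / μ (k + 1) ≤ ∑' k, 1 / μ (k + 1) :=
      Summable.sum_le_tsum _ (fun k _ => hnn k) hsum
    linarith [h1, h2 ▸ h1]
  obtain ⟨N, hNgt⟩ := exists_nat_gt (A * ∑' k, 1 / μ (k + 1))
  have hN1 : 1 ≤ N + 1 := by omega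
  have := hbound (N + 1) hN1
  rw [div_le_iff₀ hApos] at this
  push_cast at this
  nlinarith [hNgt, this]
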